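/- For all integers n ≥ 56 and all integers s with 0 ≤ 2s ≤ n, one has σ_n · (4/(πn))^{n/2} · Γ(1 + n/2) ≤ (n!/nⁿ) · (4/π)^s; that is, the centre-packing bound δ₂*(n) = σ_n (4/(πn))^{n/2} Γ(1+n/2) does not exceed the bound δ₁*(n) = (n!/nⁿ)(4/π)^s coming from the parallelepiped. -/

import Mathlib

open MeasureTheory Real Finset

/-- The Rogers ratio `vol(T)/vol(S)` for a given choice of vertices `V` of a regular
`n`-simplex of edge length 2; when the `V i` are pairwise at distance 2 this is the
Rogers constant `σ_n`. -/
noncomputable def rogersRatio {n : ℕ} (V : Fin (n + 1) → EuclideanSpace ℝ (Fin n)) : ℝ :=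
  (volume ((convexHull ℝ (Set.range V)) ∩ ⋃ i, Metric.closedBall (V i) 1)).toReal /
    (volume (convexHull ℝ (Set.range V))).toReal

section Aux

variable {n : ℕ}

variable {n : ℕ}



lemma mem_hull_rep (V : Fin (n + 1) → EuclideanSpace ℝ (Fin n))
    {x : EuclideanSpace ℝ (Fin n)} (hx : x ∈ convexHull ℝ (Set.range V)) :
    ∃ w : Fin (n + 1) → ℝ, (∀ j, 0 ≤ w j) ∧ ∑ j, w j = 1 ∧ ∑ j, w j • V j = x := by
  rw [convexHull_range_eq_exists_affineCombination] at hx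
  obtain ⟨s, w, hw0, hw1, rfl⟩ := hx
  refine ⟨fun j => if j ∈ s then w j else 0,
    fun j => by dsimp only; split_ifs with h; exacts [hw0 j h, le_rfl], ?_, ?_⟩
  · simpa using (Finset.sum_ite_mem univ s w).trans (by rw [Finset.univ_inter, hw1])
  · rw [affineCombination_eq_centerMass hw1, Finset.centerMass_eq_of_sum_1 _ _ hw1]
    have : ∀ j : Fin (n+1), (if j ∈ s then w j else 0) • V j
        = if j ∈ s then w j • V j else 0 := by
      intro j; split_ifs <;> simp
    simp only [this]
    rw [Finset.sum_ite_mem, Finset.univ_inter]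

local notation "⟪" x ", " y "⟫" => @inner ℝ _ _ x y

lemma dist_sq_formula (V : Fin (n + 1) → EuclideanSpace ℝ (Fin n))
    (hV : ∀ i j, i ≠ j → dist (V i) (V j) = 2) (i : Fin (n + 1))
    (w : Fin (n + 1) → ℝ) (hw1 : ∑ j, w j = 1) :
    ‖(∑ j, w j • V j) - V i‖ ^ 2 = 2 * (1 - 2 * w i + ∑ j, w j ^ 2) := by
  have hnorm : ∀ a b, ‖V a - V b‖ ^ 2 = if a = b then 0 else 4 := by
    intro a b
    split_ifs with h
    · subst h; simp
    · rw [← dist_eq_norm, hV a b h]; norm_num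
  have hsub : (∑ j, w j • V j) - V i = ∑ j, w j • (V j - V i) := by
    simp_rw [smul_sub, Finset.sum_sub_distrib, ← Finset.sum_smul, hw1, one_smul]
  set a : Fin (n + 1) → ℝ := fun j => w j * (if j = i then 0 else 1) with ha
  have hin : ∀ j l, (w j * w l) * ⟪V j - V i, V l - V i⟫
      = 2 * (a j * a l) + (if j = l then 2 * a j * w j else 0) := by
    intro j l
    have h := norm_sub_sq_real (V j - V i) (V l - V i)
    rw [sub_sub_sub_cancel_right, hnorm, hnorm, hnorm] at h
    have h' : ⟪V j - V i, V l - V i⟫ =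
        ((if j = i then (0:ℝ) else 4) + (if l = i then 0 else 4) - (if j = l then 0 else 4)) / 2 := by
      linarith
    rw [h', ha]
    split_ifs with h1 h2 h3 h3 h2 h3 h3 <;> subst_vars <;> ring_nf <;> (clear h h' hsub ha; simp_all) <;> ring
  have hns : ‖(∑ j, w j • V j) - V i‖ ^ 2
      = ∑ j, ∑ l, (w j * w l) * ⟪V j - V i, V l - V i⟫ := by
    rw [hsub, ← real_inner_self_eq_norm_sq, sum_inner]
    refine Finset.sum_congr rfl fun j _ => ?_
    rw [real_inner_smul_left, inner_sum, Finset.mul_sum]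
    refine Finset.sum_congr rfl fun l _ => ?_
    rw [real_inner_smul_right]; ring
  have hsa : ∑ j, a j = 1 - w i := by
    have : ∀ j : Fin (n+1), a j = w j - (if j = i then w j else 0) := by
      intro j; by_cases h : j = i <;> simp [ha, h]
    simp_rw [this, Finset.sum_sub_distrib, hw1, Finset.sum_ite_eq' univ i w, mem_univ, if_true]
  have hsaw : ∑ j, a j * w j = (∑ j, w j ^ 2) - w i ^ 2 := by
    have : ∀ j : Fin (n+1), a j * w j = w j ^ 2 - (if j = i then w j ^ 2 else 0) := by
      intro j; by_cases h : j = i <;> simp [ha, h] <;> ring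
    simp_rw [this, Finset.sum_sub_distrib, Finset.sum_ite_eq' univ i (fun j => w j ^ 2),
      mem_univ, if_true]
  rw [hns]
  simp_rw [hin]
  have h1 : ∀ j : Fin (n+1), ∑ l, (2 * (a j * a l) + if j = l then 2 * a j * w j else 0)
      = 2 * a j * (1 - w i) + 2 * a j * w j := by
    intro j
    rw [Finset.sum_add_distrib, Finset.sum_ite_eq univ j (fun _ => 2 * a j * w j),
      if_pos (mem_univ j)]
    simp_rw [show ∀ l, 2 * (a j * a l) = (2 * a j) * a l from fun l => by ring,
      ← Finset.mul_sum, hsa]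
  simp_rw [h1, Finset.sum_add_distrib,
    show ∀ j, 2 * a j * (1 - w i) = (2 * (1 - w i)) * a j from fun j => by ring,
    show ∀ j, 2 * a j * w j = 2 * (a j * w j) from fun j => by ring,
    ← Finset.mul_sum, hsa, hsaw]
  ring

lemma ball_inter_subset_homothety (hn : 1 ≤ n)
    (V : Fin (n + 1) → EuclideanSpace ℝ (Fin n))
    (hV : ∀ i j, i ≠ j → dist (V i) (V j) = 2) (i : Fin (n + 1)) :
    (convexHull ℝ (Set.range V)) ∩ Metric.closedBall (V i) 1 ⊆
      AffineMap.homothety (V i) (Real.sqrt (n / (2 * (n + 1)))) '' (convexHull ℝ (Set.range V)) := by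
  set t := Real.sqrt ((n : ℝ) / (2 * (n + 1))) with htdef
  have hnpos : (0:ℝ) < n := by exact_mod_cast hn
  have htpos : 0 < t := Real.sqrt_pos.mpr (by positivity)
  have ht2 : t ^ 2 = (n : ℝ) / (2 * (n + 1)) := Real.sq_sqrt (by positivity)
  rintro x ⟨hx, hb⟩
  obtain ⟨w, hw0, hw1, rfl⟩ := mem_hull_rep V hx
  set x := ∑ j, w j • V j with hxdef
  -- distance bound
  have hwile : w i ≤ 1 := by
    rw [← hw1]
    exact Finset.single_le_sum (fun j _ => hw0 j) (mem_univ i)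
  have hdist : ‖x - V i‖ ^ 2 ≤ 1 := by
    rw [Metric.mem_closedBall, dist_eq_norm] at hb
    nlinarith [norm_nonneg (x - V i)]
  rw [dist_sq_formula V hV i w hw1] at hdist
  -- Cauchy-Schwarz on the erased set
  have hcs : (1 - w i) ^ 2 ≤ n * ((∑ j, w j ^ 2) - w i ^ 2) := by
    have h1 : ∑ j ∈ univ.erase i, w j = 1 - w i := by
      rw [Finset.sum_erase_eq_sub (mem_univ i), hw1]
    have h2 : ∑ j ∈ univ.erase i, w j ^ 2 = (∑ j, w j ^ 2) - w i ^ 2 := by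
      rw [Finset.sum_erase_eq_sub (mem_univ i)]
    have h3 := sq_sum_le_card_mul_sum_sq (s := univ.erase i) (f := w)
    rw [h1, h2] at h3
    have hcard : (#(univ.erase i) : ℝ) = n := by
      rw [Finset.card_erase_of_mem (mem_univ i), Finset.card_univ, Fintype.card_fin]
      push_cast; ring
    calc (1 - w i)^2 ≤ (#(univ.erase i) : ℝ) * ((∑ j, w j ^ 2) - w i ^ 2) := h3
      _ = n * ((∑ j, w j ^ 2) - w i ^ 2) := by rw [hcard]
  have hwit : 1 - w i ≤ t := by
    have hsq : (1 - w i) ^ 2 ≤ t ^ 2 := by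
      rw [ht2, le_div_iff₀ (by positivity)]
      nlinarith
    calc 1 - w i = Real.sqrt ((1 - w i)^2) := (Real.sqrt_sq (by linarith)).symm
      _ ≤ Real.sqrt (t^2) := Real.sqrt_le_sqrt hsq
      _ = t := Real.sqrt_sq htpos.le
  -- construct the preimage point
  set μ : Fin (n + 1) → ℝ := fun j => if j = i then 1 - (1 - w i) / t else w j / t with hμdef
  have hμ0 : ∀ j, 0 ≤ μ j := by
    intro j
    by_cases h : j = i
    · simp only [hμdef, h, if_true]
      rw [sub_nonneg, div_le_one htpos]
      exact hwit
    · simp only [hμdef, h, if_false]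
      exact div_nonneg (hw0 j) htpos.le
  have hμ1 : ∑ j, μ j = 1 := by
    rw [← Finset.add_sum_erase univ μ (mem_univ i)]
    have h1 : μ i = 1 - (1 - w i) / t := by simp [hμdef]
    have h2 : ∑ j ∈ univ.erase i, μ j = (1 - w i) / t := by
      have : ∀ j ∈ univ.erase i, μ j = w j / t := by
        intro j hj
        simp [hμdef, Finset.ne_of_mem_erase hj]
      rw [Finset.sum_congr rfl this, ← Finset.sum_div,
        Finset.sum_erase_eq_sub (mem_univ i), hw1]
    rw [h1, h2]; ring
  refine ⟨∑ j, μ j • V j, ?_, ?_⟩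
  · have := Finset.centerMass_mem_convexHull univ (fun j _ => hμ0 j)
      (by rw [hμ1]; norm_num) (fun j _ => Set.mem_range_self (f := V) j)
    rwa [Finset.centerMass_eq_of_sum_1 _ _ hμ1] at this
  · rw [AffineMap.homothety_apply]
    have hysub : (∑ j, μ j • V j) -ᵥ V i = ∑ j, μ j • (V j - V i) := by
      simp_rw [vsub_eq_sub, smul_sub, Finset.sum_sub_distrib, ← Finset.sum_smul, hμ1, one_smul]
    have hxsub : x - V i = ∑ j, w j • (V j - V i) := by
      simp_rw [hxdef, smul_sub, Finset.sum_sub_distrib, ← Finset.sum_smul, hw1, one_smul]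
    rw [hysub, Finset.smul_sum]
    have : ∀ j : Fin (n+1), t • (μ j • (V j - V i)) = w j • (V j - V i) := by
      intro j
      by_cases h : j = i
      · subst h; simp
      · rw [smul_smul, hμdef]
        simp only [h, if_false]
        rw [mul_div_cancel₀ _ (ne_of_gt htpos)]
    rw [Finset.sum_congr rfl (fun j _ => this j), ← hxsub]
    simp [vadd_eq_add]

lemma rogersRatio_le (hn : 1 ≤ n)
    (V : Fin (n + 1) → EuclideanSpace ℝ (Fin n))
    (hV : ∀ i j, i ≠ j → dist (V i) (V j) = 2) :
    rogersRatio V ≤ (n + 1) * (Real.sqrt (n / (2 * (n + 1))))^n := by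
  set t := Real.sqrt ((n : ℝ) / (2 * (n + 1))) with htdef
  have htpos : 0 < t := Real.sqrt_pos.mpr (by positivity)
  set S := convexHull ℝ (Set.range V) with hS
  have hSfin : volume S ≠ ⊤ := by
    refine ne_of_lt ?_
    have hc : IsCompact S := (Set.finite_range V).isCompact_convexHull ℝ
    exact hc.measure_lt_top
  have hsub : volume (S ∩ ⋃ i, Metric.closedBall (V i) 1)
      ≤ (n + 1) * (ENNReal.ofReal (t ^ n) * volume S) := by
    have h1 : S ∩ ⋃ i, Metric.closedBall (V i) 1 = ⋃ i, (S ∩ Metric.closedBall (V i) 1) := by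
      rw [Set.inter_iUnion]
    rw [h1]
    refine le_trans (measure_iUnion_le _) ?_
    have h2 : ∀ i, volume (S ∩ Metric.closedBall (V i) 1)
        ≤ ENNReal.ofReal (t ^ n) * volume S := by
      intro i
      refine le_trans (measure_mono (ball_inter_subset_homothety hn V hV i)) ?_
      rw [MeasureTheory.Measure.addHaar_image_homothety]
      have : |t ^ Module.finrank ℝ (EuclideanSpace ℝ (Fin n))| = t ^ n := by
        rw [finrank_euclideanSpace_fin, abs_of_nonneg (pow_nonneg htpos.le n)]
      rw [this]
    calc ∑' i : Fin (n+1), volume (S ∩ Metric.closedBall (V i) 1)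
        ≤ ∑' _i : Fin (n+1), ENNReal.ofReal (t ^ n) * volume S := ENNReal.tsum_le_tsum h2
      _ = (n + 1) * (ENNReal.ofReal (t ^ n) * volume S) := by
          rw [tsum_fintype, Finset.sum_const, Finset.card_univ, Fintype.card_fin]
          rw [nsmul_eq_mul]
          push_cast
          ring
  rw [rogersRatio]
  rcases eq_or_ne (volume S) 0 with hS0 | hS0
  · have : volume (S ∩ ⋃ i, Metric.closedBall (V i) 1) = 0 :=
      le_antisymm (le_trans (measure_mono Set.inter_subset_left) hS0.le) (zero_le)
    rw [← hS, this]
    simp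
    positivity
  · have hSpos : 0 < (volume S).toReal := ENNReal.toReal_pos hS0 hSfin
    rw [div_le_iff₀ hSpos]
    have htr : (volume (S ∩ ⋃ i, Metric.closedBall (V i) 1)).toReal
        ≤ ((n + 1 : ℝ) * t ^ n) * (volume S).toReal := by
      have hrhs : ((n + 1 : ℕ) : ENNReal) * (ENNReal.ofReal (t ^ n) * volume S) ≠ ⊤ := by
        refine ENNReal.mul_ne_top (by simp) (ENNReal.mul_ne_top (by simp) hSfin)
      have := ENNReal.toReal_mono hrhs (le_trans hsub (by norm_cast))
      rw [ENNReal.toReal_mul, ENNReal.toReal_mul,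
        ENNReal.toReal_ofReal (pow_nonneg htpos.le n)] at this
      calc (volume (S ∩ ⋃ i, Metric.closedBall (V i) 1)).toReal
          ≤ (((n + 1 : ℕ)) : ENNReal).toReal * (t ^ n * (volume S).toReal) := this
        _ = ((n + 1 : ℝ) * t ^ n) * (volume S).toReal := by
            rw [ENNReal.toReal_natCast]; push_cast; ring
    exact htr


lemma stirling_lb (n : ℕ) : Real.sqrt π ≤ Stirling.stirlingSeq (n + 1) := by
  have ht : Filter.Tendsto (fun m => Stirling.stirlingSeq (m + 1)) Filter.atTop (nhds (Real.sqrt π)) :=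
    Stirling.tendsto_stirlingSeq_sqrt_pi.comp (Filter.tendsto_add_atTop_nat 1)
  refine le_of_tendsto ht (Filter.eventually_atTop.mpr ⟨n, fun m hm => ?_⟩)
  exact Stirling.stirlingSeq'_antitone hm

lemma factorial_lower (n : ℕ) (hn : 1 ≤ n) :
    Real.sqrt π * (Real.sqrt (2 * n) * ((n : ℝ) / Real.exp 1) ^ n) ≤ (Nat.factorial n : ℝ) := by
  obtain ⟨m, rfl⟩ : ∃ m, n = m + 1 := ⟨n - 1, by omega⟩
  have h := stirling_lb m
  rw [Stirling.stirlingSeq, le_div_iff₀ (by positivity)] at h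
  exact h

lemma factorial_upper (n : ℕ) (hn : 1 ≤ n) :
    (Nat.factorial n : ℝ) ≤ Real.exp 1 * Real.sqrt n * ((n : ℝ) / Real.exp 1) ^ n := by
  obtain ⟨m, rfl⟩ : ∃ m, n = m + 1 := ⟨n - 1, by omega⟩
  have h : Stirling.stirlingSeq (m + 1) ≤ Stirling.stirlingSeq 1 := by
    have := Stirling.stirlingSeq'_antitone (Nat.zero_le m)
    simpa using this
  rw [Stirling.stirlingSeq_one, Stirling.stirlingSeq,
    div_le_div_iff₀ (by positivity) (by positivity)] at h
  have h2 : Real.sqrt (2 * ((m:ℝ) + 1)) = Real.sqrt 2 * Real.sqrt ((m:ℝ)+1) :=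
    Real.sqrt_mul (by norm_num) _
  have h3 : (0:ℝ) < Real.sqrt 2 := by positivity
  push_cast at h ⊢
  rw [h2] at h
  nlinarith [Real.sq_sqrt (show (0:ℝ) ≤ 2 by norm_num), Real.sqrt_nonneg ((m:ℝ)+1),
    pow_pos (show (0:ℝ) < ((m:ℝ)+1)/Real.exp 1 by positivity) (m+1), Real.exp_pos 1]


lemma gamma_sq_le (n : ℕ) :
    Real.Gamma (1 + (n : ℝ) / 2) ^ 2 ≤
      (Nat.factorial (n / 2) : ℝ) * (Nat.factorial (n - n / 2) : ℝ) := by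
  set k := n / 2 with hk
  have hkn : k ≤ n := Nat.div_le_self n 2
  have hsum : (k : ℝ) + (n - k : ℕ) = n := by
    push_cast [Nat.cast_sub hkn]; ring
  have hc := Real.convexOn_log_Gamma
  have hx : ((k : ℝ) + 1) ∈ Set.Ioi (0:ℝ) := Set.mem_Ioi.mpr (by positivity)
  have hy : (((n - k : ℕ) : ℝ) + 1) ∈ Set.Ioi (0:ℝ) := Set.mem_Ioi.mpr (by positivity)
  have hmid := hc.2 hx hy (by norm_num : (0:ℝ) ≤ 1/2) (by norm_num : (0:ℝ) ≤ 1/2) (by norm_num)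
  have hpt : (1/2 : ℝ) • ((k : ℝ) + 1) + (1/2 : ℝ) • (((n - k : ℕ) : ℝ) + 1) = 1 + (n : ℝ)/2 := by
    have := hsum
    simp only [smul_eq_mul]
    linarith
  rw [hpt] at hmid
  simp only [Function.comp, smul_eq_mul] at hmid
  have hG : 0 < Real.Gamma (1 + (n:ℝ)/2) := Real.Gamma_pos_of_pos (by positivity)
  have hGx : Real.Gamma ((k:ℝ) + 1) = (Nat.factorial k : ℝ) := Real.Gamma_nat_eq_factorial k
  have hGy : Real.Gamma (((n - k : ℕ):ℝ) + 1) = (Nat.factorial (n-k) : ℝ) := Real.Gamma_nat_eq_factorial (n-k)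
  have hfx : 0 < (Nat.factorial k : ℝ) := by positivity
  have hfy : 0 < (Nat.factorial (n-k) : ℝ) := by positivity
  have h2 : Real.log (Real.Gamma (1 + (n:ℝ)/2) ^ 2) ≤
      Real.log ((Nat.factorial k : ℝ) * (Nat.factorial (n-k) : ℝ)) := by
    rw [Real.log_pow, Real.log_mul (ne_of_gt hfx) (ne_of_gt hfy), ← hGx, ← hGy]
    push_cast
    linarith [hmid]
  calc Real.Gamma (1 + (n:ℝ)/2) ^ 2
      = Real.exp (Real.log (Real.Gamma (1 + (n:ℝ)/2) ^ 2)) := by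
        rw [Real.exp_log (by positivity)]
    _ ≤ Real.exp (Real.log ((Nat.factorial k : ℝ) * (Nat.factorial (n-k) : ℝ))) :=
        Real.exp_le_exp.mpr h2
    _ = _ := Real.exp_log (by positivity)


lemma numeric_key (n : ℕ) (hn : 56 ≤ n) :
    ((n : ℝ) + 1) ^ 2 * Real.exp 1 ^ (n + 2) ≤ 4 * π ^ (n + 1) := by
  induction n, hn using Nat.le_induction with
  | base =>
    have he : Real.exp 1 ≤ 2.7182818286 := (Real.exp_one_lt_d9).le
    have hp : (3.141592 : ℝ) ≤ π := Real.pi_gt_d6.le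
    have h1 : Real.exp 1 ^ (58 : ℕ) ≤ 2.7182818286 ^ (58 : ℕ) :=
      pow_le_pow_left₀ (Real.exp_pos 1).le he 58
    have h2 : (3.141592 : ℝ) ^ (57 : ℕ) ≤ π ^ (57 : ℕ) :=
      pow_le_pow_left₀ (by norm_num) hp 57
    have key : ((57:ℝ))^2 * 2.7182818286 ^ (58:ℕ) ≤ 4 * (3.141592:ℝ) ^ (57:ℕ) := by
      norm_num
    have goal' : (57:ℝ)^2 * Real.exp 1 ^ (58:ℕ) ≤ 4 * π ^ (57:ℕ) := by
      calc (57:ℝ)^2 * Real.exp 1 ^ (58:ℕ) ≤ 57^2 * 2.7182818286 ^ (58:ℕ) := by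
            exact mul_le_mul_of_nonneg_left h1 (by norm_num)
        _ ≤ 4 * (3.141592:ℝ) ^ (57:ℕ) := key
        _ ≤ 4 * π ^ (57:ℕ) := by exact mul_le_mul_of_nonneg_left h2 (by norm_num)
    have hc : ((56:ℕ):ℝ) + 1 = 57 := by norm_num
    rw [hc]
    exact goal'
  | succ m hm ih =>
    have he : Real.exp 1 ≤ 2.7182818286 := (Real.exp_one_lt_d9).le
    have hp : (3.141592 : ℝ) ≤ π := Real.pi_gt_d6.le
    have hm' : (56:ℝ) ≤ m := by exact_mod_cast hm
    have step : ((m:ℝ) + 2)^2 * Real.exp 1 ≤ π * ((m:ℝ)+1)^2 := by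
      nlinarith [Real.exp_pos 1]
    have hpow : (0:ℝ) < Real.exp 1 ^ (m+2) := by positivity
    have hpi : (0:ℝ) < π ^ (m+1) := by positivity
    push_cast
    calc ((m:ℝ)+1+1)^2 * Real.exp 1 ^ (m+1+2)
        = (((m:ℝ)+2)^2 * Real.exp 1) * Real.exp 1 ^ (m+2) := by ring
      _ ≤ (π * ((m:ℝ)+1)^2) * Real.exp 1 ^ (m+2) := by
          exact mul_le_mul_of_nonneg_right step hpow.le
      _ = π * (((m:ℝ)+1)^2 * Real.exp 1 ^ (m+2)) := by ring
      _ ≤ π * (4 * π ^ (m+1)) := by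
          exact mul_le_mul_of_nonneg_left ih Real.pi_pos.le
      _ = 4 * π ^ (m+1+1) := by ring


/-- For all `n ≥ 56` and all `0 ≤ 2s ≤ n`, the centre-packing bound coming from the sphere
does not exceed that coming from the parallelepiped:
`σ_n (4/(πn))^{n/2} Γ(1 + n/2) ≤ (n!/nⁿ)(4/π)^s`. -/
theorem sphere_bound_le_parallelepiped_bound (n s : ℕ) (hn : 56 ≤ n) (hs : 2 * s ≤ n)
    (V : Fin (n + 1) → EuclideanSpace ℝ (Fin n))
    (hV : ∀ i j, i ≠ j → dist (V i) (V j) = 2) :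
    rogersRatio V * (4 / (π * n)) ^ ((n : ℝ) / 2) * Real.Gamma (1 + (n : ℝ) / 2) ≤
      ((Nat.factorial n : ℝ) / (n : ℝ) ^ n) * (4 / π) ^ s := by
  have hn1 : 1 ≤ n := by omega
  have hnR : (1:ℝ) ≤ n := by exact_mod_cast hn1
  have hnpos : (0:ℝ) < n := by linarith
  set e := Real.exp 1 with he
  have hepos : 0 < e := Real.exp_pos 1
  set t := Real.sqrt ((n : ℝ) / (2 * ((n:ℝ) + 1))) with ht
  have htpos : 0 < t := Real.sqrt_pos.mpr (by positivity)
  have ht2 : t ^ 2 = (n : ℝ) / (2 * ((n:ℝ) + 1)) := Real.sq_sqrt (by positivity)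
  have hppos : (0:ℝ) < 4 / (π * n) := by positivity
  have hG : 0 < Real.Gamma (1 + (n : ℝ) / 2) := Real.Gamma_pos_of_pos (by positivity)
  have hfact : (0:ℝ) < (Nat.factorial n : ℝ) / (n:ℝ)^n := by positivity
  -- it suffices to treat s = 0
  have hrhs : ((Nat.factorial n : ℝ) / (n : ℝ) ^ n)
      ≤ ((Nat.factorial n : ℝ) / (n : ℝ) ^ n) * (4 / π) ^ s := by
    nth_rewrite 1 [← mul_one ((Nat.factorial n : ℝ) / (n : ℝ) ^ n)]
    refine mul_le_mul_of_nonneg_left (one_le_pow₀ ?_) hfact.le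
    rw [le_div_iff₀ Real.pi_pos]
    linarith [Real.pi_le_four]
  refine le_trans ?_ hrhs
  -- bound the Rogers ratio
  have h0 : rogersRatio V ≤ ((n:ℝ) + 1) * t ^ n := rogersRatio_le hn1 V hV
  have hrr0 : 0 ≤ rogersRatio V := div_nonneg ENNReal.toReal_nonneg ENNReal.toReal_nonneg
  have hB : rogersRatio V * (4 / (π * n)) ^ ((n : ℝ) / 2) * Real.Gamma (1 + (n : ℝ) / 2)
      ≤ (((n:ℝ) + 1) * t ^ n) * (4 / (π * n)) ^ ((n : ℝ) / 2)
        * Real.Gamma (1 + (n : ℝ) / 2) := by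
    have h1 : (0:ℝ) < (4 / (π * n)) ^ ((n : ℝ) / 2) := Real.rpow_pos_of_pos hppos _
    gcongr
  refine le_trans hB ?_
  set B := (((n:ℝ) + 1) * t ^ n) * (4 / (π * n)) ^ ((n : ℝ) / 2)
    * Real.Gamma (1 + (n : ℝ) / 2) with hBdef
  have hBpos : 0 ≤ B := by
    have h1 : (0:ℝ) < (4 / (π * n)) ^ ((n : ℝ) / 2) := Real.rpow_pos_of_pos hppos _
    positivity
  rw [← pow_le_pow_iff_left₀ hBpos hfact.le (two_ne_zero)]
  have hsq : B^2 = ((n:ℝ)+1)^2 * (2/(π*((n:ℝ)+1)))^n * Real.Gamma (1 + (n:ℝ)/2)^2 := by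
    have h1 : ((4 / (π * n)) ^ ((n : ℝ) / 2))^2 = (4/(π*(n:ℝ)))^(n:ℕ) := by
      rw [sq, ← Real.rpow_add hppos,
        show (n:ℝ)/2 + (n:ℝ)/2 = ((n:ℕ):ℝ) by push_cast; ring, Real.rpow_natCast]
    have h2 : (t^n)^2 = ((n:ℝ) / (2*((n:ℝ)+1)))^n := by
      rw [← pow_mul, mul_comm n 2, pow_mul, ht2]
    have h3 : ((n:ℝ) / (2*((n:ℝ)+1)))^n * (4/(π*(n:ℝ)))^n = (2/(π*((n:ℝ)+1)))^n := by
      rw [← mul_pow]; congr 1; field_simp; ring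
    calc B^2 = ((n:ℝ)+1)^2 * ((t^n)^2 * ((4 / (π * n)) ^ ((n : ℝ) / 2))^2)
        * Real.Gamma (1 + (n:ℝ)/2)^2 := by rw [hBdef]; ring
      _ = ((n:ℝ)+1)^2 * (((n:ℝ) / (2*((n:ℝ)+1)))^n * (4/(π*(n:ℝ)))^n)
        * Real.Gamma (1 + (n:ℝ)/2)^2 := by rw [h1, h2]
      _ = _ := by rw [h3]
  rw [hsq]
  -- Gamma and Stirling bounds
  set k := n / 2 with hk
  have hk1 : 1 ≤ k := by omega
  have hm1 : 1 ≤ n - k := by omega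
  have hkm : k + (n - k) = n := by omega
  have hkmr : (k:ℝ) + ((n-k:ℕ):ℝ) = (n:ℝ) := by exact_mod_cast congrArg (Nat.cast (R := ℝ)) hkm
  have hγ := gamma_sq_le n
  have hupper : (Nat.factorial k : ℝ) * (Nat.factorial (n-k) : ℝ)
      ≤ e^2 * ((n:ℝ)/2) * (((n:ℝ)+1)/2)^n / e^n := by
    have hsqrt : Real.sqrt k * Real.sqrt ((n-k:ℕ):ℝ) ≤ (n:ℝ)/2 := by
      rw [← Real.sqrt_mul (by positivity)]
      have hle : (k:ℝ) * ((n-k:ℕ):ℝ) ≤ ((n:ℝ)/2)^2 := by nlinarith [hkmr, sq_nonneg ((k:ℝ) - ((n-k:ℕ):ℝ))]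
      calc Real.sqrt ((k:ℝ) * ((n-k:ℕ):ℝ)) ≤ Real.sqrt (((n:ℝ)/2)^2) := Real.sqrt_le_sqrt hle
        _ = (n:ℝ)/2 := Real.sqrt_sq (by positivity)
    have hpowb : ((k:ℝ))^k * (((n-k:ℕ):ℝ))^(n-k) ≤ (((n:ℝ)+1)/2)^n := by
      have h1 : (k:ℝ) ≤ ((n:ℝ)+1)/2 := by
        have : (2*k : ℕ) ≤ n + 1 := by omega
        have := (Nat.cast_le (α := ℝ)).mpr this
        push_cast at this; linarith
      have h2 : ((n-k:ℕ):ℝ) ≤ ((n:ℝ)+1)/2 := by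
        have : (2*(n-k) : ℕ) ≤ n + 1 := by omega
        have := (Nat.cast_le (α := ℝ)).mpr this
        push_cast at this; linarith
      calc ((k:ℝ))^k * (((n-k:ℕ):ℝ))^(n-k)
          ≤ (((n:ℝ)+1)/2)^k * (((n:ℝ)+1)/2)^(n-k) :=
            mul_le_mul (pow_le_pow_left₀ (by positivity) h1 k)
              (pow_le_pow_left₀ (by positivity) h2 (n-k)) (by positivity) (by positivity)
        _ = (((n:ℝ)+1)/2)^n := by rw [← pow_add, hkm]
    have hku := factorial_upper k hk1
    have hmu := factorial_upper (n-k) hm1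
    calc (Nat.factorial k : ℝ) * (Nat.factorial (n-k) : ℝ)
        ≤ (e * Real.sqrt k * ((k:ℝ)/e)^k) * (e * Real.sqrt ((n-k:ℕ):ℝ) * (((n-k:ℕ):ℝ)/e)^(n-k)) :=
          mul_le_mul hku hmu (by positivity) (by positivity)
      _ = e^2 * (Real.sqrt k * Real.sqrt ((n-k:ℕ):ℝ))
          * (((k:ℝ))^k * (((n-k:ℕ):ℝ))^(n-k)) / (e^k * e^(n-k)) := by
          rw [div_pow, div_pow]; field_simp
      _ = e^2 * (Real.sqrt k * Real.sqrt ((n-k:ℕ):ℝ))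
          * (((k:ℝ))^k * (((n-k:ℕ):ℝ))^(n-k)) / e^n := by rw [← pow_add, hkm]
      _ ≤ e^2 * ((n:ℝ)/2) * (((n:ℝ)+1)/2)^n / e^n := by
          gcongr
  have hlower : 2 * π * (n:ℝ) / e^(2*n) ≤ ((Nat.factorial n : ℝ)/(n:ℝ)^n)^2 := by
    have hfl := factorial_lower n hn1
    have h1 : (Real.sqrt π * (Real.sqrt (2*(n:ℝ)) * ((n:ℝ)/e)^n))^2 ≤ ((Nat.factorial n : ℝ))^2 :=
      pow_le_pow_left₀ (by positivity) hfl 2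
    have h2 : (Real.sqrt π * (Real.sqrt (2*(n:ℝ)) * ((n:ℝ)/e)^n))^2
        = 2*π*(n:ℝ)*((n:ℝ)^n)^2 / e^(2*n) := by
      rw [mul_pow, mul_pow, Real.sq_sqrt Real.pi_pos.le, Real.sq_sqrt (by positivity),
        div_pow, div_pow, ← pow_mul e n 2, Nat.mul_comm n 2]
      ring
    rw [h2] at h1
    rw [div_pow, div_le_div_iff₀ (by positivity) (by positivity)]
    calc 2*π*(n:ℝ) * ((n:ℝ)^n)^2
        = (2*π*(n:ℝ)*((n:ℝ)^n)^2 / e^(2*n)) * e^(2*n) := by field_simp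
      _ ≤ ((Nat.factorial n : ℝ))^2 * e^(2*n) := mul_le_mul_of_nonneg_right h1 (by positivity)
  have hkey := numeric_key n hn
  calc ((n:ℝ)+1)^2 * (2/(π*((n:ℝ)+1)))^n * Real.Gamma (1 + (n:ℝ)/2)^2
      ≤ ((n:ℝ)+1)^2 * (2/(π*((n:ℝ)+1)))^n
        * ((Nat.factorial k : ℝ) * (Nat.factorial (n-k) : ℝ)) :=
        mul_le_mul_of_nonneg_left hγ (by positivity)
    _ ≤ ((n:ℝ)+1)^2 * (2/(π*((n:ℝ)+1)))^n
        * (e^2 * ((n:ℝ)/2) * (((n:ℝ)+1)/2)^n / e^n) :=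
        mul_le_mul_of_nonneg_left hupper (by positivity)
    _ = ((n:ℝ)+1)^2 * e^2 * ((n:ℝ)/2) / (π^n * e^n) := by
        have h3 : (2/(π*((n:ℝ)+1)))^n * (((n:ℝ)+1)/2)^n = 1/π^n := by
          rw [← mul_pow, ← one_div_pow]; congr 1; field_simp
        calc ((n:ℝ)+1)^2 * (2/(π*((n:ℝ)+1)))^n * (e^2 * ((n:ℝ)/2) * (((n:ℝ)+1)/2)^n / e^n)
            = ((n:ℝ)+1)^2 * ((2/(π*((n:ℝ)+1)))^n * (((n:ℝ)+1)/2)^n)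
              * (e^2 * ((n:ℝ)/2)) / e^n := by ring
          _ = _ := by rw [h3]; ring
    _ ≤ 2 * π * (n:ℝ) / e^(2*n) := by
        rw [div_le_div_iff₀ (by positivity) (by positivity)]
        have hee : e^2 * e^(2*n) = e^(n+2) * e^n := by
          rw [← pow_add, ← pow_add]; congr 1; omega
        calc ((n:ℝ)+1)^2 * e^2 * ((n:ℝ)/2) * e^(2*n)
            = ((n:ℝ)/2) * (((n:ℝ)+1)^2 * (e^2 * e^(2*n))) := by ring
          _ = ((n:ℝ)/2) * ((((n:ℝ)+1)^2 * e^(n+2)) * e^n) := by rw [hee]; ring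
          _ ≤ ((n:ℝ)/2) * ((4 * π^(n+1)) * e^n) :=
              mul_le_mul_of_nonneg_left
                (mul_le_mul_of_nonneg_right hkey (by positivity)) (by positivity)
          _ = 2 * π * (n:ℝ) * (π^n * e^n) := by rw [pow_succ]; ring
    _ ≤ ((Nat.factorial n : ℝ)/(n:ℝ)^n)^2 := hlower
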